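/- arXiv:1310.1544 — 2 statements merged into one kernel-verified Lean document; each statement's English description precedes it below -/
import Mathlib

section
/- Let p be an odd prime, η a multiplicative character of F_p with η(0)=0 and η² nontrivial, S an invertible symmetric matrix over F_p of odd rank r (i.e., S is r×r invertible, embedded as S ⊕ 0_{l-r} in size l), c ∈ F_p, and d ∈ F_p^×. Then Σ_{w ∈ F_p^l} η((S⊕0)[wᵀ] + cd) = η(d) φ(d)^r · Σ_{w ∈ F_p^l} η((S⊕0)[wᵀ] + c), where φ is the quadratic character. -/
open Matrix

/-- The quadratic character of `ZMod p` with values in `ℂ`. -/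
noncomputable def quadCharC (p : ℕ) [Fact p.Prime] : MulChar (ZMod p) ℂ :=
  (quadraticChar (ZMod p)).ringHomComp (Int.castRingHom ℂ)

section Aux

open Finset

variable (p : ℕ) [Fact p.Prime]

lemma rc2 (hp : p ≠ 2) : ringChar (ZMod p) ≠ 2 := by rw [ZMod.ringChar_zmod_n]; exact hp

lemma qc_sq (a : ZMod p) (ha : a ≠ 0) : quadCharC p a ^ 2 = 1 := by
  have h := quadraticChar_sq_one ha
  simp only [quadCharC, MulChar.ringHomComp_apply, map_intCast, eq_intCast, ← Int.cast_pow, h,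
    Int.cast_one]

lemma qc_sum (hp : p ≠ 2) : ∑ a : ZMod p, quadCharC p a = 0 := by
  have h := quadraticChar_sum_zero (rc2 p hp)
  have := congrArg (Int.cast : ℤ → ℂ) h
  push_cast at this
  simpa [quadCharC, MulChar.ringHomComp_apply] using this

lemma qc_ne_one (hp : p ≠ 2) : quadCharC p ≠ 1 := by
  have h := quadraticChar_ne_one (rc2 p hp)
  exact (MulChar.ringHomComp_ne_one_iff (Int.cast_injective (α := ℂ))).mpr h

lemma qc_sqrts (hp : p ≠ 2) (a : ZMod p) :
    ((Finset.univ.filter (fun x : ZMod p => x ^ 2 = a)).card : ℂ) = quadCharC p a + 1 := by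
  have h := quadraticChar_card_sqrts (rc2 p hp) a
  have h2 : {x : ZMod p | x ^ 2 = a}.toFinset = Finset.univ.filter (fun x : ZMod p => x ^ 2 = a) := by
    ext x; simp
  rw [h2] at h
  have := congrArg (Int.cast : ℤ → ℂ) h
  push_cast at this
  simpa [quadCharC, MulChar.ringHomComp_apply] using this


lemma qc_mul_self (hp : p ≠ 2) : quadCharC p * quadCharC p = 1 := by
  apply MulChar.ext
  intro a
  rw [MulChar.mul_apply, ← pow_two, MulChar.one_apply_coe]
  exact qc_sq p a a.ne_zero

lemma qc_inv (hp : p ≠ 2) : (quadCharC p)⁻¹ = quadCharC p :=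
  inv_eq_of_mul_eq_one_right (qc_mul_self p hp)

lemma qc_zero : quadCharC p 0 = 0 := by
  simp [quadCharC, MulChar.ringHomComp_apply]

lemma delta_sum (c : ℂ) : ∑ t : ZMod p, (if t = 0 then c else 0) = c := by
  rw [Finset.sum_ite_eq' Finset.univ (0 : ZMod p) (fun _ => c)]
  simp

lemma qc_jacobi (hp : p ≠ 2) (a : ZMod p) :
    ∑ t : ZMod p, quadCharC p t * quadCharC p (a - t) =
      quadCharC p (-1) * (p * (if a = 0 then 1 else 0) - 1) := by
  by_cases ha : a = 0
  · subst ha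
    rw [if_pos rfl]
    have step : ∀ t : ZMod p, quadCharC p t * quadCharC p (0 - t) =
        quadCharC p (-1) - quadCharC p (-1) * (if t = 0 then 1 else 0) := by
      intro t
      by_cases ht : t = 0
      · simp [ht, qc_zero]
      · rw [if_neg ht, mul_zero, sub_zero, zero_sub, show (-t : ZMod p) = -1 * t by ring,
          _root_.map_mul]
        have := qc_sq p t ht
        calc quadCharC p t * (quadCharC p (-1) * quadCharC p t)
            = quadCharC p t ^ 2 * quadCharC p (-1) := by ring
          _ = quadCharC p (-1) := by rw [this, one_mul]
    rw [Finset.sum_congr rfl fun t _ => step t, Finset.sum_sub_distrib, Finset.sum_const,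
      ← Finset.mul_sum, delta_sum p, Finset.card_univ]
    have : (Fintype.card (ZMod p) : ℂ) = p := by rw [ZMod.card]
    rw [nsmul_eq_mul, this]
    ring
  · rw [if_neg ha]
    have key : ∑ t : ZMod p, quadCharC p t * quadCharC p (a - t) =
        ∑ s : ZMod p, quadCharC p (a * s) * quadCharC p (a - a * s) :=
      (Fintype.sum_equiv (Equiv.mulLeft₀ a ha) _ _ (fun s => rfl)).symm
    rw [key]
    have step : ∀ s : ZMod p, quadCharC p (a * s) * quadCharC p (a - a * s) =
        quadCharC p s * quadCharC p (1 - s) := by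
      intro s
      rw [show a - a * s = a * (1 - s) by ring, _root_.map_mul, _root_.map_mul]
      have := qc_sq p a ha
      calc quadCharC p a * quadCharC p s * (quadCharC p a * quadCharC p (1 - s))
          = quadCharC p a ^ 2 * (quadCharC p s * quadCharC p (1 - s)) := by ring
        _ = quadCharC p s * quadCharC p (1 - s) := by rw [this, one_mul]
    rw [Finset.sum_congr rfl fun s _ => step s]
    have hj : ∑ s : ZMod p, quadCharC p s * quadCharC p (1 - s) =
        jacobiSum (quadCharC p) (quadCharC p) := rfl
    rw [hj]
    nth_rewrite 2 [← qc_inv p hp]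
    rw [jacobiSum_nontrivial_inv (qc_ne_one p hp)]
    ring

noncomputable def Ncc (p : ℕ) [Fact p.Prime] (n : ℕ) (u : Fin n → (ZMod p)ˣ) (a : ZMod p) : ℂ :=
  ∑ w : Fin n → ZMod p, if (∑ i, (u i : ZMod p) * w i ^ 2) = a then 1 else 0

lemma sq_reindex (f : ZMod p → ℂ) (hp : p ≠ 2) :
    ∑ x : ZMod p, f (x ^ 2) = ∑ t : ZMod p, (quadCharC p t + 1) * f t := by
  have h1 : ∀ x : ZMod p, f (x ^ 2) = ∑ t : ZMod p, if x ^ 2 = t then f t else 0 := by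
    intro x
    rw [Finset.sum_ite_eq Finset.univ (x ^ 2) f]
    simp
  rw [Finset.sum_congr rfl fun x _ => h1 x, Finset.sum_comm]
  refine Finset.sum_congr rfl fun t _ => ?_
  rw [Finset.sum_ite, Finset.sum_const, Finset.sum_const, smul_zero, add_zero,
    nsmul_eq_mul, qc_sqrts p hp t]

lemma affine_sum_zero (hp : p ≠ 2) (e : ZMod p) (he : e ≠ 0) (c : ZMod p) :
    ∑ t : ZMod p, quadCharC p (c - e * t) = 0 := by
  have := Fintype.sum_equiv ((Equiv.mulLeft₀ e he).trans (Equiv.subLeft c))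
    (fun t => quadCharC p (c - e * t)) (fun s => quadCharC p s) (fun t => rfl)
  rw [this, qc_sum p hp]


lemma Ncc_formula (hp : p ≠ 2) : ∀ (n : ℕ) (u : Fin n → (ZMod p)ˣ), ∃ B C : ℂ,
    (Even n → B = 0) ∧ (Odd n → C = 0) ∧
    ∀ a : ZMod p, (p : ℂ) * Ncc p n u a =
      (p : ℂ) ^ n + B * quadCharC p a + C * ((p : ℂ) * (if a = 0 then 1 else 0) - 1) := by
  intro n
  induction n with
  | zero =>
    intro u
    refine ⟨0, 1, fun _ => rfl, fun h => absurd h (by simp), fun a => ?_⟩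
    have h0 : Ncc p 0 u a = if a = 0 then 1 else 0 := by
      simp [Ncc, eq_comm]
    rw [h0]
    by_cases ha : a = 0 <;> simp [ha] <;> ring
  | succ n ih =>
    intro u
    obtain ⟨B, C, hBe, hCo, hIH⟩ := ih (u ∘ Fin.succ)
    set χ := quadCharC p with hχdef
    set u0 : ZMod p := (u 0 : ZMod p) with hu0def
    have hu0 : u0 ≠ 0 := (u 0).ne_zero
    refine ⟨C * p * χ u0⁻¹, B * χ u0⁻¹ * χ (-1), ?_, ?_, ?_⟩
    · intro he
      have hn : Odd n := Nat.not_even_iff_odd.mp (Nat.even_add_one.mp he)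
      rw [hCo hn]; ring
    · intro ho
      have hn : Even n := by
        rcases Nat.even_or_odd n with h | h
        · exact h
        · exact absurd ho (by simp [Nat.even_add_one, Nat.odd_iff, Nat.even_iff] at h ⊢; omega)
      rw [hBe hn]; ring
    · intro a
      -- recursion step
      have hrec : Ncc p (n + 1) u a = ∑ x : ZMod p, Ncc p n (u ∘ Fin.succ) (a - u0 * x ^ 2) := by
        simp only [Ncc]
        rw [← (Fin.consEquiv (fun _ => ZMod p)).sum_comp]
        rw [Fintype.sum_prod_type]
        refine Finset.sum_congr rfl fun x _ => Finset.sum_congr rfl fun v _ => ?_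
        congr 1
        · rw [Fin.sum_univ_succ]
          simp only [Fin.consEquiv_apply, Fin.cons_zero,
            Fin.cons_succ, Function.comp_apply]
          rw [eq_comm, eq_sub_iff_add_eq', eq_comm]
      have hmul : (p : ℂ) * Ncc p (n + 1) u a
          = ∑ x : ZMod p, ((p:ℂ) ^ n + B * χ (a - u0 * x ^ 2)
              + C * ((p : ℂ) * (if a - u0 * x ^ 2 = 0 then 1 else 0) - 1)) := by
        rw [hrec, Finset.mul_sum]
        exact Finset.sum_congr rfl fun x _ => hIH _
      rw [hmul]
      rw [Finset.sum_add_distrib, Finset.sum_add_distrib, Finset.sum_const, Finset.card_univ,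
        ZMod.card, ← Finset.mul_sum, ← Finset.mul_sum]
      -- the B-term
      have hB : ∑ x : ZMod p, χ (a - u0 * x ^ 2) = χ u0⁻¹ * χ (-1) * ((p:ℂ) * (if a = 0 then 1 else 0) - 1) := by
        rw [sq_reindex p (fun t => χ (a - u0 * t)) hp]
        have expand : ∀ t : ZMod p, (χ t + 1) * χ (a - u0 * t) = χ t * χ (a - u0 * t) + χ (a - u0 * t) := by
          intro t; ring
        rw [Finset.sum_congr rfl fun t _ => expand t, Finset.sum_add_distrib,
          affine_sum_zero p hp u0 hu0 a, add_zero]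
        have reidx : ∑ t : ZMod p, χ t * χ (a - u0 * t) = ∑ s : ZMod p, χ (u0⁻¹ * s) * χ (a - s) := by
          refine Fintype.sum_equiv (Equiv.mulLeft₀ u0 hu0) _ _ fun t => ?_
          show χ t * χ (a - u0 * t) = χ (u0⁻¹ * (u0 * t)) * χ (a - u0 * t)
          rw [inv_mul_cancel_left₀ hu0]
        rw [reidx]
        have split : ∀ s : ZMod p, χ (u0⁻¹ * s) * χ (a - s) = χ u0⁻¹ * (χ s * χ (a - s)) := by
          intro s; rw [_root_.map_mul]; ring
        rw [Finset.sum_congr rfl fun s _ => split s, ← Finset.mul_sum, hχdef,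
          qc_jacobi p hp a]
        ring
      -- the C-term
      have hC : ∑ x : ZMod p, ((p : ℂ) * (if a - u0 * x ^ 2 = 0 then 1 else 0) - 1)
          = (p : ℂ) * (χ u0⁻¹ * χ a) := by
        have hiff : ∀ x : ZMod p, (a - u0 * x ^ 2 = 0) ↔ (x ^ 2 = u0⁻¹ * a) := by
          intro x
          rw [sub_eq_zero, eq_comm, ← eq_inv_mul_iff_mul_eq₀ hu0]
        have : ∀ x : ZMod p, ((p : ℂ) * (if a - u0 * x ^ 2 = 0 then 1 else 0) - 1)
            = (p : ℂ) * (if x ^ 2 = u0⁻¹ * a then 1 else 0) - 1 := by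
          intro x; rw [if_congr (hiff x) rfl rfl]
        rw [Finset.sum_congr rfl fun x _ => this x, Finset.sum_sub_distrib, ← Finset.mul_sum,
          Finset.sum_const, Finset.card_univ, ZMod.card]
        have hcount : ∑ x : ZMod p, (if x ^ 2 = u0⁻¹ * a then (1:ℂ) else 0) = χ (u0⁻¹ * a) + 1 := by
          rw [Finset.sum_boole, hχdef, ← qc_sqrts p hp (u0⁻¹ * a)]
        rw [hcount, _root_.map_mul]
        push_cast
        ring
      rw [hB, hC]
      push_cast
      ring

lemma eta_shift_sum (η : MulChar (ZMod p) ℂ) (hη : η ≠ 1) (c : ZMod p) :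
    ∑ a : ZMod p, η (a + c) = 0 := by
  rw [Fintype.sum_equiv (Equiv.addRight c) (fun a => η (a + c)) (fun s => η s) (fun a => rfl)]
  exact MulChar.sum_eq_zero_of_ne_one hη

lemma group_by_val (n : ℕ) (u : Fin n → (ZMod p)ˣ) (η : MulChar (ZMod p) ℂ) (c : ZMod p) :
    ∑ w : Fin n → ZMod p, η ((∑ i, (u i : ZMod p) * w i ^ 2) + c) =
      ∑ a : ZMod p, Ncc p n u a * η (a + c) := by
  have h1 : ∀ w : Fin n → ZMod p, η ((∑ i, (u i : ZMod p) * w i ^ 2) + c) =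
      ∑ a : ZMod p, if (∑ i, (u i : ZMod p) * w i ^ 2) = a then η (a + c) else 0 := by
    intro w
    rw [Finset.sum_ite_eq Finset.univ _ (fun a => η (a + c))]
    simp
  rw [Finset.sum_congr rfl fun w _ => h1 w, Finset.sum_comm]
  refine Finset.sum_congr rfl fun a _ => ?_
  rw [Ncc, Finset.sum_mul]
  refine Finset.sum_congr rfl fun w _ => ?_
  by_cases h : (∑ i, (u i : ZMod p) * w i ^ 2) = a <;> simp [h]

lemma diag_scale (hp : p ≠ 2) (η : MulChar (ZMod p) ℂ) (hη : η ^ 2 ≠ 1) (n : ℕ) (hn : Odd n)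
    (u : Fin n → (ZMod p)ˣ) (c d : ZMod p) (hd : d ≠ 0) :
    ∑ w : Fin n → ZMod p, η ((∑ i, (u i : ZMod p) * w i ^ 2) + c * d) =
      η d * quadCharC p d *
        ∑ w : Fin n → ZMod p, η ((∑ i, (u i : ZMod p) * w i ^ 2) + c) := by
  have hη1 : η ≠ 1 := fun h => hη (by rw [h, one_pow])
  obtain ⟨B, C, _, hC0, hF⟩ := Ncc_formula p hp n u
  have hC : C = 0 := hC0 hn
  subst hC
  have key : ∀ c' : ZMod p, (p : ℂ) * ∑ w : Fin n → ZMod p,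
      η ((∑ i, (u i : ZMod p) * w i ^ 2) + c') =
      B * ∑ a : ZMod p, quadCharC p a * η (a + c') := by
    intro c'
    rw [group_by_val p n u η c', Finset.mul_sum]
    have h2 : ∀ a : ZMod p, (p : ℂ) * (Ncc p n u a * η (a + c')) =
        (p : ℂ) ^ n * η (a + c') + B * (quadCharC p a * η (a + c')) := by
      intro a
      rw [← mul_assoc, hF a]
      ring
    rw [Finset.sum_congr rfl fun a _ => h2 a, Finset.sum_add_distrib, ← Finset.mul_sum,
      ← Finset.mul_sum, eta_shift_sum p η hη1 c', mul_zero, zero_add]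
  have reidx : ∑ a : ZMod p, quadCharC p a * η (a + c * d) =
      quadCharC p d * η d * ∑ b : ZMod p, quadCharC p b * η (b + c) := by
    rw [Finset.mul_sum]
    refine Fintype.sum_equiv (Equiv.mulLeft₀ d hd).symm _ _ fun a => ?_
    show quadCharC p a * η (a + c * d) = quadCharC p d * η d * (quadCharC p (d⁻¹ * a) * η (d⁻¹ * a + c))
    have h1 : d * (d⁻¹ * a) = a := mul_inv_cancel_left₀ hd a
    have h2 : d * (d⁻¹ * a + c) = a + c * d := by rw [mul_add, h1]; ring
    rw [show quadCharC p d * η d * (quadCharC p (d⁻¹ * a) * η (d⁻¹ * a + c))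
        = (quadCharC p d * quadCharC p (d⁻¹ * a)) * (η d * η (d⁻¹ * a + c)) by ring,
      ← _root_.map_mul, ← _root_.map_mul, h1, h2]
  have hp0 : (p : ℂ) ≠ 0 := Nat.cast_ne_zero.mpr (Fact.out (p := p.Prime)).pos.ne'
  apply mul_left_cancel₀ hp0
  rw [key (c * d), reidx,
    show (p : ℂ) * (η d * quadCharC p d *
        ∑ w : Fin n → ZMod p, η ((∑ i, (u i : ZMod p) * w i ^ 2) + c))
      = η d * quadCharC p d * ((p : ℂ) *
        ∑ w : Fin n → ZMod p, η ((∑ i, (u i : ZMod p) * w i ^ 2) + c)) by ring,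
    key c]
  ring

lemma matrix_scale (hp : p ≠ 2) (η : MulChar (ZMod p) ℂ) (hη : η ^ 2 ≠ 1) (r : ℕ) (hr : Odd r)
    (S₀ : Matrix (Fin r) (Fin r) (ZMod p)) (hS₀ : S₀ᵀ = S₀) (hS₀det : IsUnit S₀.det)
    (c d : ZMod p) (hd : d ≠ 0) :
    ∑ x : Fin r → ZMod p, η (dotProduct x (S₀ *ᵥ x) + c * d) =
      η d * quadCharC p d *
        ∑ x : Fin r → ZMod p, η (dotProduct x (S₀ *ᵥ x) + c) := by
  haveI : Invertible (2 : ZMod p) := by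
    refine invertibleOfNonzero ?_
    have : ((2 : ℕ) : ZMod p) ≠ 0 := by
      rw [Ne, ZMod.natCast_eq_zero_iff]
      exact fun h => hp ((Nat.prime_dvd_prime_iff_eq (Fact.out) Nat.prime_two).mp h)
    exact_mod_cast this
  set Q : QuadraticForm (ZMod p) (Fin r → ZMod p) := Matrix.toQuadraticMap' S₀ with hQdef
  have hQapp : ∀ x, Q x = dotProduct x (S₀ *ᵥ x) := by
    intro x
    rw [hQdef, Matrix.toQuadraticMap', Matrix.toQuadraticForm', LinearMap.BilinMap.toQuadraticMap_apply,
      Matrix.toLinearMap₂'_apply']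
  have hsym : (Matrix.toLinearMap₂' (ZMod p) S₀).IsSymm := by
    rw [LinearMap.isSymm_def]; intro x y
    simp only [RingHom.id_apply, Matrix.toLinearMap₂'_apply']
    rw [Matrix.dotProduct_mulVec, ← Matrix.vecMul_transpose, hS₀, dotProduct_comm]
  have hassoc : QuadraticMap.associated (R := ZMod p) Q = Matrix.toLinearMap₂' (ZMod p) S₀ :=
    QuadraticMap.associated_left_inverse _ (LinearMap.isSymm_def.mp hsym)
  have hsep : (QuadraticMap.associated (R := ZMod p) Q).SeparatingLeft := by
    rw [hassoc]
    exact Matrix.separatingLeft_toLinearMap₂'_iff.mpr (Matrix.separatingLeft_iff_det_ne_zero.mpr hS₀det.ne_zero)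
  obtain ⟨u, ⟨iso⟩⟩ := Q.equivalent_weightedSumSquares_units_of_nondegenerate' hsep
  have hnr : Module.finrank (ZMod p) (Fin r → ZMod p) = r := by
    rw [Module.finrank_fintype_fun_eq_card, Fintype.card_fin]
  have trans : ∀ c' : ZMod p,
      ∑ x : Fin r → ZMod p, η (dotProduct x (S₀ *ᵥ x) + c') =
      ∑ v : Fin (Module.finrank (ZMod p) (Fin r → ZMod p)) → ZMod p,
        η ((∑ i, (u i : ZMod p) * v i ^ 2) + c') := by
    intro c'
    rw [← Equiv.sum_comp iso.toLinearEquiv.toEquiv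
      (fun v => η ((∑ i, (u i : ZMod p) * v i ^ 2) + c'))]
    refine Finset.sum_congr rfl fun x _ => ?_
    congr 1
    have h1 : (∑ i, (u i : ZMod p) * (iso.toLinearEquiv.toEquiv x) i ^ 2)
        = QuadraticMap.weightedSumSquares (ZMod p) u (iso x) := by
      rw [QuadraticMap.weightedSumSquares_apply]
      exact (Finset.sum_congr rfl fun i _ => by rw [Units.smul_def, smul_eq_mul, sq]; rfl).symm
    rw [h1, iso.map_app x, hQapp x]
  rw [trans (c * d), trans c, diag_scale p hp η hη _ (by rw [hnr]; exact hr) u c d hd]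


end Aux

/-- Corollary to Lemma 5.3 (scaling relation): for `p` an odd prime, `η` a multiplicative
character with `η² ≠ 1`, `S = S₀ ⊕ O` with `S₀` invertible symmetric of odd size `r`,
`c ∈ F_p` and `d ∈ F_p^×`, one has `I_{η,S,cd} = η(d) φ(d)^r I_{η,S,c}`. -/
theorem charSum_quadForm_scale (p r k : ℕ) [Fact p.Prime] (hp : p ≠ 2)
    (η : MulChar (ZMod p) ℂ) (hη : η ^ 2 ≠ 1) (hr : Odd r)
    (S₀ : Matrix (Fin r) (Fin r) (ZMod p)) (hS₀ : S₀ᵀ = S₀) (hS₀det : IsUnit S₀.det)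
    (c : ZMod p) (d : ZMod p) (hd : d ≠ 0) :
    (∑ w : Fin r ⊕ Fin k → ZMod p,
        η (dotProduct w ((Matrix.fromBlocks S₀ 0 0 0).mulVec w) + c * d)) =
      η d * (quadCharC p d) ^ r *
        ∑ w : Fin r ⊕ Fin k → ZMod p,
          η (dotProduct w ((Matrix.fromBlocks S₀ 0 0 0).mulVec w) + c) := by
  have hblock : ∀ w : Fin r ⊕ Fin k → ZMod p,
      dotProduct w ((Matrix.fromBlocks S₀ 0 0 0).mulVec w) =
      dotProduct (w ∘ Sum.inl) (S₀ *ᵥ (w ∘ Sum.inl)) := by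
    intro w
    simp [dotProduct, Matrix.mulVec, Fintype.sum_sum_type, Matrix.fromBlocks,
      Function.comp]
  have hsplit : ∀ c' : ZMod p,
      (∑ w : Fin r ⊕ Fin k → ZMod p,
        η (dotProduct w ((Matrix.fromBlocks S₀ 0 0 0).mulVec w) + c')) =
      (p : ℂ) ^ k * ∑ x : Fin r → ZMod p, η (dotProduct x (S₀ *ᵥ x) + c') := by
    intro c'
    rw [Finset.sum_congr rfl fun w _ => by rw [hblock w]]
    rw [← Equiv.sum_comp (Equiv.sumArrowEquivProdArrow (Fin r) (Fin k) (ZMod p)).symm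
      (fun w => η (dotProduct (w ∘ Sum.inl) (S₀ *ᵥ (w ∘ Sum.inl)) + c'))]
    rw [Fintype.sum_prod_type]
    have hxy : ∀ (x : Fin r → ZMod p) (y : Fin k → ZMod p),
        (((Equiv.sumArrowEquivProdArrow (Fin r) (Fin k) (ZMod p)).symm (x, y)) ∘ Sum.inl) = x := by
      intro x y; rfl
    rw [Finset.sum_congr rfl fun x _ => Finset.sum_congr rfl fun y _ => by rw [hxy x y]]
    rw [Finset.sum_congr rfl fun x _ => Finset.sum_const _]
    rw [Finset.sum_congr rfl fun x (_ : x ∈ Finset.univ) => nsmul_eq_mul _ _, ← Finset.mul_sum]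
    congr 1
    rw [Finset.card_univ]
    simp [ZMod.card]
  have hpow : quadCharC p d ^ r = quadCharC p d := by
    obtain ⟨m, hm⟩ := hr
    rw [hm, pow_add, pow_mul, qc_sq p d hd, one_pow, one_mul, pow_one]
  rw [hsplit (c * d), hsplit c, hpow,
    matrix_scale p hp η hη r hr S₀ hS₀ hS₀det c d hd]
  ring
end

section
/- Let p be an odd prime, l ≥ 2, η a multiplicative character of F_p with η² nontrivial, S₀ an invertible symmetric 1×1 matrix (a nonzero scalar s) over F_p, and S = s ⊕ O_{l-1} the l×l matrix of rank 1. Then for c ∈ F_p: Σ_{w ∈ F_p^l} η(s·w₁² + c) = p^{l-1} · J(η,φ) · φ(-s) · η(c) · φ(c), where φ is the quadratic character and J(η,φ) the Jacobi sum; in particular the sum is 0 when c = 0. -/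
open Matrix

lemma quadCharC_apply (p : ℕ) [Fact p.Prime] (a : ZMod p) :
    quadCharC p a = ((quadraticChar (ZMod p) a : ℤ) : ℂ) := rfl

lemma ringChar_ne_two (p : ℕ) [Fact p.Prime] (hp : p ≠ 2) : ringChar (ZMod p) ≠ 2 := by
  rw [ZMod.ringChar_zmod_n]; exact_mod_cast hp

lemma quadCharC_sq_one (p : ℕ) [Fact p.Prime] {a : ZMod p} (ha : a ≠ 0) :
    quadCharC p a ^ 2 = 1 := by
  rw [quadCharC_apply]
  rw [← Int.cast_pow, quadraticChar_sq_one ha, Int.cast_one]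

/-- One-dimensional character sum. -/
lemma charSum_one_dim (p : ℕ) [Fact p.Prime] (hp : p ≠ 2)
    (η : MulChar (ZMod p) ℂ) (hη : η ^ 2 ≠ 1)
    (s : ZMod p) (hs : s ≠ 0) (c : ZMod p) :
    (∑ x : ZMod p, η (s * x ^ 2 + c)) =
      jacobiSum η (quadCharC p) * quadCharC p (-s) * η c * quadCharC p c := by
  have hch := ringChar_ne_two p hp
  have hη1 : η ≠ 1 := fun h => hη (by rw [h, one_pow])
  have hquad : (quadCharC p) ^ 2 = 1 :=
    ((quadraticChar_isQuadratic (ZMod p)).comp (Int.castRingHom ℂ)).sq_eq_one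
  -- counting square roots
  have hcard : ∀ u : ZMod p,
      (((Finset.univ.filter (fun x : ZMod p => x ^ 2 = u)).card : ℂ)) = 1 + quadCharC p u := by
    intro u
    have h := quadraticChar_card_sqrts hch u
    rw [show {x : ZMod p | x ^ 2 = u}.toFinset = Finset.univ.filter (fun x : ZMod p => x ^ 2 = u)
        by ext x; simp] at h
    rw [quadCharC_apply]
    exact_mod_cast (by rw [h]; ring : ((Finset.univ.filter
      (fun x : ZMod p => x ^ 2 = u)).card : ℤ) = 1 + quadraticChar (ZMod p) u)
  -- rewrite as a sum over values of the square
  have step1 : (∑ x : ZMod p, η (s * x ^ 2 + c)) =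
      ∑ u : ZMod p, (1 + quadCharC p u) * η (s * u + c) := by
    rw [← Finset.sum_fiberwise' Finset.univ (fun x : ZMod p => x ^ 2)
      (fun u => η (s * u + c))]
    refine Finset.sum_congr rfl fun u _ => ?_
    rw [Finset.sum_const, nsmul_eq_mul, hcard]
  rw [step1]
  have split : ∑ u : ZMod p, (1 + quadCharC p u) * η (s * u + c) =
      (∑ u : ZMod p, η (s * u + c)) + ∑ u : ZMod p, quadCharC p u * η (s * u + c) := by
    rw [← Finset.sum_add_distrib]
    exact Finset.sum_congr rfl fun u _ => by ring
  rw [split]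
  -- first sum vanishes
  have h1 : (∑ u : ZMod p, η (s * u + c)) = 0 := by
    have hb : Function.Bijective (fun u : ZMod p => s * u + c) :=
      ((Equiv.mulLeft₀ s hs).trans (Equiv.addRight c)).bijective
    rw [Fintype.sum_bijective _ hb _ (fun t => η t) (fun _ => rfl)]
    exact MulChar.sum_eq_zero_of_ne_one hη1
  rw [h1, zero_add]
  -- second sum
  by_cases hc : c = 0
  · subst hc
    have : ∑ u : ZMod p, quadCharC p u * η (s * u + 0) =
        η s * ∑ u : ZMod p, (quadCharC p * η) u := by
      rw [Finset.mul_sum]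
      refine Finset.sum_congr rfl fun u _ => ?_
      rw [MulChar.mul_apply, add_zero, _root_.map_mul η]; ring
    rw [this]
    have hmul : quadCharC p * η ≠ 1 := by
      intro h
      apply hη
      have : (quadCharC p * η) ^ 2 = 1 := by rw [h, one_pow]
      rwa [mul_pow, hquad, one_mul] at this
    rw [MulChar.sum_eq_zero_of_ne_one hmul, mul_zero]
    rw [show η (0 : ZMod p) = 0 from η.map_nonunit (by simp)]
    ring
  · -- substitute u = -(c * s⁻¹) * t
    have hcs : -(c * s⁻¹) ≠ 0 := by
      simp only [neg_ne_zero, mul_ne_zero_iff]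
      exact ⟨hc, inv_ne_zero hs⟩
    have hb : Function.Bijective (fun t : ZMod p => -(c * s⁻¹) * t) :=
      (Equiv.mulLeft₀ _ hcs).bijective
    have h2 : ∑ u : ZMod p, quadCharC p u * η (s * u + c) =
        ∑ t : ZMod p, quadCharC p (-(c * s⁻¹)) * quadCharC p t * (η c * η (1 - t)) := by
      rw [← Fintype.sum_bijective _ hb _
        (fun u => quadCharC p u * η (s * u + c)) (fun _ => rfl)]
      refine Fintype.sum_congr _ _ fun t => ?_
      have harg : s * (-(c * s⁻¹) * t) + c = c * (1 - t) := by
        field_simp; ring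
      show quadCharC p (-(c * s⁻¹) * t) * η (s * (-(c * s⁻¹) * t) + c) = _
      rw [harg, _root_.map_mul (quadCharC p), _root_.map_mul η]
    rw [h2]
    have hsum : ∑ t : ZMod p, quadCharC p (-(c * s⁻¹)) * quadCharC p t * (η c * η (1 - t)) =
        quadCharC p (-(c * s⁻¹)) * η c * jacobiSum (quadCharC p) η := by
      rw [jacobiSum, Finset.mul_sum]
      exact Finset.sum_congr rfl fun t _ => by ring
    rw [hsum, jacobiSum_comm]
    have hval : quadCharC p (-(c * s⁻¹)) = quadCharC p (-s) * quadCharC p c := by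
      have : -(c * s⁻¹) = (-s) * c * (s⁻¹) ^ 2 := by field_simp
      rw [this, _root_.map_mul (quadCharC p), _root_.map_mul (quadCharC p), _root_.map_pow (quadCharC p), quadCharC_sq_one p (inv_ne_zero hs), mul_one]
    rw [hval]
    ring

/-- Rank-one odd case of Lemma 5.3: for `p` an odd prime, `η` with `η² ≠ 1`, `s ≠ 0`,
`l ≥ 2` and `c ∈ F_p`,
`∑_{w ∈ F_p^l} η(s w₁² + c) = p^(l-1) J(η,φ) φ(-s) η(c) φ(c)`;
in particular the sum vanishes when `c = 0`. -/
theorem charSum_rank_one (p l : ℕ) [Fact p.Prime] (hp : p ≠ 2)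
    (η : MulChar (ZMod p) ℂ) (hη : η ^ 2 ≠ 1) (hl : 2 ≤ l)
    (s : ZMod p) (hs : s ≠ 0) (c : ZMod p) :
    (∑ w : Fin l → ZMod p, η (s * (w ⟨0, by omega⟩) ^ 2 + c)) =
      (p : ℂ) ^ (l - 1) * jacobiSum η (quadCharC p) * quadCharC p (-s) *
        η c * quadCharC p c := by
  obtain ⟨k, rfl⟩ : ∃ k, l = k + 1 := ⟨l - 1, by omega⟩
  have hfac : (∑ w : Fin (k + 1) → ZMod p, η (s * (w ⟨0, by omega⟩) ^ 2 + c)) =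
      (p : ℂ) ^ k * ∑ x : ZMod p, η (s * x ^ 2 + c) := by
    rw [← (Fin.consEquiv (fun _ : Fin (k + 1) => ZMod p)).sum_comp
      (fun w => η (s * (w ⟨0, by omega⟩) ^ 2 + c))]
    rw [Fintype.sum_prod_type]
    have : ∀ x : ZMod p, ∑ _g : Fin k → ZMod p,
        η (s * x ^ 2 + c) = (p : ℂ) ^ k * η (s * x ^ 2 + c) := by
      intro x
      rw [Finset.sum_const, nsmul_eq_mul]
      congr 1
      simp [ZMod.card]
    calc ∑ x : ZMod p, ∑ g : Fin k → ZMod p,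
          η (s * (((Fin.consEquiv (fun _ : Fin (k + 1) => ZMod p)) (x, g)) ⟨0, by omega⟩) ^ 2 + c)
        = ∑ x : ZMod p, ∑ _g : Fin k → ZMod p, η (s * x ^ 2 + c) := by
          refine Finset.sum_congr rfl fun x _ => Finset.sum_congr rfl fun g _ => ?_
          congr 2
      _ = ∑ x : ZMod p, (p : ℂ) ^ k * η (s * x ^ 2 + c) := by
          exact Finset.sum_congr rfl fun x _ => this x
      _ = (p : ℂ) ^ k * ∑ x : ZMod p, η (s * x ^ 2 + c) := by rw [← Finset.mul_sum]
  rw [hfac, charSum_one_dim p hp η hη s hs c]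
  have : k + 1 - 1 = k := by omega
  rw [this]
  ring
end
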